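/- Let μ = π_2 ⊗ K be the joint law of (X_2, X_3) for the Kendall random walk with α = 1 and unit step δ_1. Then on the probability space (ℝ², μ), the coordinate random variable U(u,v) = u and the increment W(u,v) = v − u are not independent; equivalently, there exist w > 0 and z > 1 with μ({(u,v) : v − u < w and u < z}) ≠ μ({(u,v) : v − u < w}) · μ({(u,v) : u < z}). -/

import Mathlib

open MeasureTheory Set
open scoped ENNReal

/-- The Pareto probability measure `π_2`, with density `2 x⁻³ 1_{(1,∞)}(x)`. -/
noncomputable def pareto2 : Measure ℝ :=
  volume.withDensity (fun x => ENNReal.ofReal (if 1 < x then 2 / x ^ 3 else 0))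

/-- The distribution `λ_k = δ_1^{△_1 k}` of the state `X_k` of the Kendall random walk
(`α = 1`, unit step `δ_1`), with density `k (k-1) x⁻³ (1 - 1/x)^(k-2) 1_{(1,∞)}(x)`
for `k ≥ 2`. -/
noncomputable def lamK (k : ℕ) : Measure ℝ :=
  volume.withDensity (fun x => ENNReal.ofReal
    (if 1 < x then (k : ℝ) * ((k : ℝ) - 1) / x ^ 3 * (1 - 1 / x) ^ (k - 2) else 0))

/-- The one-step transition kernel `K(u, ·) = u⁻¹ (T_u π_2) + (1 - u⁻¹) δ_u` of the
Kendall random walk with `α = 1` and unit step `δ_1`. -/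
noncomputable def kendallStep (u : ℝ) : Measure ℝ :=
  ENNReal.ofReal u⁻¹ • Measure.map (fun x => u * x) pareto2
    + ENNReal.ofReal (1 - u⁻¹) • Measure.dirac u

/-- The joint law `μ_k = λ_k ⊗ K` of two consecutive states `(X_k, X_{k+1})`:
`μ_k(C) = ∫ K(u, {v : (u,v) ∈ C}) λ_k(du)`. -/
noncomputable def jointLaw (k : ℕ) : Measure (ℝ × ℝ) :=
  (lamK k).bind (fun u => (kendallStep u).map (fun v => (u, v)))

/-! ### auxiliary material -/


noncomputable def D : ℝ → ℝ≥0∞ := (Ioi (1:ℝ)).indicator (fun x => ENNReal.ofReal (2 / x ^ 3))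

lemma measurable_D : Measurable D :=
  (ENNReal.measurable_ofReal.comp (measurable_const.div ((measurable_id.pow_const 3)))).indicator
    measurableSet_Ioi

lemma pareto2_eq : pareto2 = volume.withDensity D := by
  unfold pareto2 D
  congr 1
  funext x
  by_cases h : 1 < x <;> simp [Set.indicator_apply, mem_Ioi, h]

lemma lamK_two_eq : lamK 2 = volume.withDensity D := by
  unfold lamK D
  congr 1
  funext x
  by_cases h : 1 < x <;> simp [Set.indicator_apply, mem_Ioi, h] <;> norm_num

lemma pareto2_apply {s : Set ℝ} (hs : MeasurableSet s) :
    pareto2 s = ∫⁻ x in s ∩ Ioi 1, ENNReal.ofReal (2 / x ^ 3) := by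
  rw [pareto2_eq, withDensity_apply _ hs]
  unfold D
  rw [lintegral_indicator measurableSet_Ioi, Measure.restrict_restrict measurableSet_Ioi,
    Set.inter_comm]

/-- antiderivative of `2 / x ^ 3` -/
lemma hasDerivAt_phi {x : ℝ} (hx : x ≠ 0) :
    HasDerivAt (fun x : ℝ => -1 / x ^ 2) (2 / x ^ 3) x := by
  have h1 : HasDerivAt (fun x : ℝ => x ^ 2) (2 * x) x := by simpa using hasDerivAt_pow 2 x
  have h2 := (h1.inv (pow_ne_zero 2 hx)).neg
  have hval : -(-(2 * x) / (x ^ 2) ^ 2) = 2 / x ^ 3 := by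
    field_simp
  rw [← hval]
  have h2' : HasDerivAt (fun y : ℝ => -(y ^ 2)⁻¹) (-(-(2 * x) / (x ^ 2) ^ 2)) x := h2
  simpa [neg_div, one_div] using h2'

lemma integral_Ioo_d {t : ℝ} (ht : 1 < t) :
    ∫ x in Ioo 1 t, 2 / x ^ 3 = 1 - 1 / t ^ 2 := by
  rw [← integral_Ioc_eq_integral_Ioo, ← intervalIntegral.integral_of_le ht.le]
  have : ∫ x in (1:ℝ)..t, 2 / x ^ 3 = (-1 / t ^ 2) - (-1 / 1 ^ 2) := by
    apply intervalIntegral.integral_eq_sub_of_hasDerivAt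
    · intro x hx
      rw [uIcc_of_le ht.le] at hx
      exact hasDerivAt_phi (by nlinarith [hx.1])
    · apply ContinuousOn.intervalIntegrable
      apply continuousOn_const.div (continuousOn_pow 3)
      intro x hx
      rw [uIcc_of_le ht.le] at hx
      have : (1:ℝ) ≤ x := hx.1
      positivity
  rw [this]; ring

lemma integrableOn_d_Ioo {t : ℝ} :
    IntegrableOn (fun x : ℝ => 2 / x ^ 3) (Ioo 1 t) := by
  apply (ContinuousOn.integrableOn_Icc ?_).mono_set Ioo_subset_Icc_self
  apply continuousOn_const.div (continuousOn_pow 3)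
  intro x hx
  have : (1:ℝ) ≤ x := hx.1
  positivity

lemma lint_Ioo {t : ℝ} (ht : 1 < t) :
    ∫⁻ x in Ioo 1 t, ENNReal.ofReal (2 / x ^ 3) = ENNReal.ofReal (1 - 1 / t ^ 2) := by
  have hnn : (0:ℝ → ℝ) ≤ᶠ[ae (volume.restrict (Ioo 1 t))] fun x : ℝ => 2 / x ^ 3 := by
    refine (ae_restrict_iff' measurableSet_Ioo).2 (ae_of_all _ fun x hx => ?_)
    simp only [Pi.zero_apply]
    have : (1:ℝ) < x := hx.1
    positivity
  rw [← ofReal_integral_eq_lintegral_ofReal integrableOn_d_Ioo hnn, integral_Ioo_d ht]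

lemma pareto2_Iio {t : ℝ} (ht : 1 < t) :
    pareto2 (Iio t) = ENNReal.ofReal (1 - 1 / t ^ 2) := by
  rw [pareto2_apply measurableSet_Iio, Set.Iio_inter_Ioi, ← lint_Ioo ht]

lemma lint_Ioi : ∫⁻ x in Ioi 1, ENNReal.ofReal (2 / x ^ 3) = 1 := by
  have hcont : ContinuousWithinAt (fun x : ℝ => -1 / x ^ 2) (Ici 1) 1 :=
    (hasDerivAt_phi one_ne_zero).continuousAt.continuousWithinAt
  have hderiv : ∀ x ∈ Ioi (1:ℝ), HasDerivAt (fun x : ℝ => -1 / x ^ 2) (2 / x ^ 3) x :=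
    fun x hx => hasDerivAt_phi (by exact ne_of_gt (lt_trans one_pos hx))
  have hpos : ∀ x ∈ Ioi (1:ℝ), 0 ≤ 2 / x ^ 3 := by
    intro x hx
    have : (1:ℝ) < x := hx
    positivity
  have htend : Filter.Tendsto (fun x : ℝ => -1 / x ^ 2) Filter.atTop (nhds 0) :=
    tendsto_const_nhds.div_atTop (Filter.tendsto_pow_atTop two_ne_zero)
  have hval := integral_Ioi_of_hasDerivAt_of_nonneg hcont hderiv hpos htend
  have hnn : (0:ℝ → ℝ) ≤ᶠ[ae (volume.restrict (Ioi 1))] fun x : ℝ => 2 / x ^ 3 := by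
    refine (ae_restrict_iff' measurableSet_Ioi).2 (ae_of_all _ fun x hx => ?_)
    simp only [Pi.zero_apply]
    exact hpos x hx
  rw [← ofReal_integral_eq_lintegral_ofReal
    (integrableOn_Ioi_deriv_of_nonneg hcont hderiv hpos htend) hnn, hval]
  norm_num

lemma pareto2_univ : pareto2 univ = 1 := by
  rw [pareto2_apply MeasurableSet.univ, Set.univ_inter, lint_Ioi]

/-! ### kernel values -/

instance : SFinite pareto2 := by unfold pareto2; infer_instance

lemma kendall_univ {u : ℝ} (hu : 1 < u) : kendallStep u univ = 1 := by
  have hmul : Measurable fun x : ℝ => u * x := measurable_const_mul u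
  rw [kendallStep, Measure.add_apply, Measure.smul_apply, Measure.smul_apply, smul_eq_mul,
    smul_eq_mul, Measure.map_apply hmul MeasurableSet.univ, Set.preimage_univ, pareto2_univ,
    Measure.dirac_apply' _ MeasurableSet.univ]
  have h0 : (0:ℝ) ≤ u⁻¹ := by positivity
  have h1 : (0:ℝ) ≤ 1 - u⁻¹ := by
    rw [sub_nonneg, inv_le_one_iff₀]
    right; linarith
  simp only [Set.indicator_univ, Pi.one_apply, mul_one]
  rw [← ENNReal.ofReal_add h0 h1]
  norm_num

lemma kendall_Iio {u : ℝ} (hu : 1 < u) :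
    kendallStep u (Iio (u + 1)) = ENNReal.ofReal (1 - u / (u + 1) ^ 2) := by
  have hu0 : (0:ℝ) < u := by linarith
  have hmul : Measurable fun x : ℝ => u * x := measurable_const_mul u
  have hpre : (fun x : ℝ => u * x) ⁻¹' (Iio (u + 1)) = Iio ((u + 1) / u) := by
    ext x
    simp only [mem_preimage, mem_Iio, lt_div_iff₀ hu0, mul_comm]
  have ht : 1 < (u + 1) / u := by rw [lt_div_iff₀ hu0]; linarith
  rw [kendallStep, Measure.add_apply, Measure.smul_apply, Measure.smul_apply, smul_eq_mul,
    smul_eq_mul, Measure.map_apply hmul measurableSet_Iio, hpre, pareto2_Iio ht,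
    Measure.dirac_apply' _ measurableSet_Iio,
    Set.indicator_of_mem (by simp : u ∈ Iio (u + 1)), Pi.one_apply, mul_one]
  have hle : 1 / ((u + 1) / u) ^ 2 ≤ 1 := by
    rw [div_le_one (by positivity)]
    nlinarith
  rw [← ENNReal.ofReal_mul (by positivity), ← ENNReal.ofReal_add
    (mul_nonneg (by positivity) (by linarith)) (by
    rw [sub_nonneg, inv_le_one_iff₀]; right; linarith)]
  congr 1
  field_simp
  ring

/-! ### measurability of the kernel map -/

lemma measKer : Measurable fun u : ℝ => (kendallStep u).map (fun v => (u, v)) := by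
  apply Measure.measurable_of_measurable_coe
  intro s hs
  have key : ∀ u : ℝ, ((kendallStep u).map (fun v => (u, v))) s
      = ENNReal.ofReal u⁻¹ * ∫⁻ x, s.indicator 1 (u, u * x) ∂pareto2
        + ENNReal.ofReal (1 - u⁻¹) * s.indicator 1 (u, u) := by
    intro u
    rw [Measure.map_apply measurable_prodMk_left hs, kendallStep, Measure.add_apply,
      Measure.smul_apply, Measure.smul_apply, smul_eq_mul, smul_eq_mul,
      Measure.map_apply (measurable_const_mul u) (measurable_prodMk_left hs),
      Measure.dirac_apply' _ (measurable_prodMk_left hs)]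
    have e1 : pareto2 ((fun x => u * x) ⁻¹' ((fun v => (u, v)) ⁻¹' s))
        = ∫⁻ x, s.indicator 1 (u, u * x) ∂pareto2 := by
      rw [← lintegral_indicator_one ((measurable_const_mul u) (measurable_prodMk_left hs))]
      apply lintegral_congr
      intro x
      by_cases h : (u, u * x) ∈ s <;> simp [Set.indicator, h, Set.mem_preimage]
    have e2 : Set.indicator ((fun v => (u, v)) ⁻¹' s) (1 : ℝ → ℝ≥0∞) u
        = s.indicator 1 (u, u) := by
      by_cases h : (u, u) ∈ s <;> simp [Set.indicator, h, Set.mem_preimage]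
    rw [e1, e2]
  simp_rw [key]
  apply Measurable.add
  · apply Measurable.mul (ENNReal.measurable_ofReal.comp measurable_inv)
    apply Measurable.lintegral_prod_right'
      (f := fun p : ℝ × ℝ => s.indicator 1 (p.1, p.1 * p.2))
    exact (measurable_const.indicator hs).comp
      (measurable_fst.prodMk (measurable_fst.mul measurable_snd))
  · apply Measurable.mul
    · exact ENNReal.measurable_ofReal.comp (measurable_const.sub measurable_inv)
    · exact (measurable_const.indicator hs).comp (measurable_id.prodMk measurable_id)

lemma jointLaw_two_apply {s : Set (ℝ × ℝ)} (hs : MeasurableSet s) :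
    jointLaw 2 s = ∫⁻ u, (D u) * kendallStep u ((fun v => (u, v)) ⁻¹' s) ∂volume := by
  have hmap : ∀ u : ℝ, ((kendallStep u).map (fun v => (u, v))) s
      = kendallStep u ((fun v => (u, v)) ⁻¹' s) :=
    fun u => Measure.map_apply measurable_prodMk_left hs
  have hF : Measurable fun u : ℝ => kendallStep u ((fun v => (u, v)) ⁻¹' s) := by
    have h := (Measure.measurable_coe hs).comp measKer
    simpa only [Function.comp_def, hmap] using h
  rw [jointLaw, Measure.bind_apply hs measKer.aemeasurable]
  simp_rw [hmap]
  rw [lamK_two_eq, lintegral_withDensity_eq_lintegral_mul volume measurable_D hF]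
  rfl

/-! ### the antiderivative G1 -/

noncomputable def G1 (u : ℝ) : ℝ :=
  -(u ^ 2)⁻¹ + 4 * Real.log u + 2 * u⁻¹ - 4 * Real.log (u + 1) + 2 * (u + 1)⁻¹

noncomputable def h1fn (u : ℝ) : ℝ := 2 / u ^ 3 * (1 - u / (u + 1) ^ 2)

lemma hasDerivAt_G1 {u : ℝ} (hu : 0 < u) : HasDerivAt G1 (h1fn u) u := by
  have hu' : u ≠ 0 := hu.ne'
  have hu1 : u + 1 ≠ 0 := by positivity
  have d4u : HasDerivAt (fun x : ℝ => x + 1) 1 u := (hasDerivAt_id u).add_const 1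
  have d1 := ((hasDerivAt_pow 2 u).inv (pow_ne_zero 2 hu')).neg
  have d2 := (Real.hasDerivAt_log hu').const_mul (4:ℝ)
  have d3 := (hasDerivAt_inv hu').const_mul (2:ℝ)
  have d4 := (d4u.log hu1).const_mul (4:ℝ)
  have d5 := (d4u.inv hu1).const_mul (2:ℝ)
  have dd := (((d1.add d2).add d3).sub d4).add d5
  unfold G1
  refine dd.congr_deriv ?_
  unfold h1fn
  field_simp
  ring

lemma tendsto_G1 : Filter.Tendsto G1 Filter.atTop (nhds 0) := by
  have h1 : Filter.Tendsto (fun u : ℝ => (u ^ 2)⁻¹) Filter.atTop (nhds 0) :=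
    tendsto_inv_atTop_zero.comp (Filter.tendsto_pow_atTop two_ne_zero)
  have h2 : Filter.Tendsto (fun u : ℝ => u⁻¹) Filter.atTop (nhds 0) := tendsto_inv_atTop_zero
  have h3 : Filter.Tendsto (fun u : ℝ => (u + 1)⁻¹) Filter.atTop (nhds 0) :=
    tendsto_inv_atTop_zero.comp (Filter.tendsto_atTop_add_const_right _ 1 Filter.tendsto_id)
  have ha : Filter.Tendsto (fun u : ℝ => u / (u + 1)) Filter.atTop (nhds 1) := by
    have heq : (fun u : ℝ => u / (u + 1)) =ᶠ[Filter.atTop] fun u => 1 - (u + 1)⁻¹ := by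
      filter_upwards [Filter.eventually_gt_atTop (0:ℝ)] with u hu
      have : u + 1 ≠ 0 := by positivity
      field_simp
      ring
    rw [Filter.tendsto_congr' heq]
    simpa using tendsto_const_nhds.sub h3
  have hlog : Filter.Tendsto (fun u : ℝ => Real.log (u / (u + 1))) Filter.atTop (nhds 0) := by
    have := (Real.continuousAt_log one_ne_zero).tendsto.comp ha
    simpa [Function.comp_def] using this
  have h4 : Filter.Tendsto (fun u : ℝ => Real.log u - Real.log (u + 1)) Filter.atTop (nhds 0) := by
    apply hlog.congr'
    filter_upwards [Filter.eventually_gt_atTop (0:ℝ)] with u hu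
    rw [Real.log_div hu.ne' (by positivity)]
  have hcomb := ((h1.neg.add (h2.const_mul 2)).add (h3.const_mul 2)).add (h4.const_mul 4)
  have hcomb' : Filter.Tendsto
      (fun u : ℝ => -(u ^ 2)⁻¹ + 2 * u⁻¹ + 2 * (u + 1)⁻¹
        + 4 * (Real.log u - Real.log (u + 1))) Filter.atTop (nhds 0) := by
    simpa using hcomb
  apply hcomb'.congr
  intro u
  unfold G1
  ring

lemma h1fn_nonneg {x : ℝ} (hx : 1 < x) : 0 ≤ h1fn x := by
  unfold h1fn
  have h0 : (0:ℝ) < x := by linarith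
  have h2 : x / (x + 1) ^ 2 ≤ 1 := by
    rw [div_le_one (by positivity)]
    nlinarith
  have : (0:ℝ) ≤ 2 / x ^ 3 := by positivity
  nlinarith

lemma continuousOn_h1fn : ContinuousOn h1fn (Icc (1:ℝ) 2) := by
  apply ContinuousOn.mul
  · apply continuousOn_const.div (continuousOn_pow 3)
    intro x hx
    have : (1:ℝ) ≤ x := hx.1
    positivity
  · apply continuousOn_const.sub
    apply ContinuousOn.div continuous_id.continuousOn
      ((continuous_id.add continuous_const).pow 2).continuousOn
    intro x hx
    have : (1:ℝ) ≤ x := hx.1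
    show (x + 1) ^ 2 ≠ 0
    positivity

lemma hasDerivAt_G1' : ∀ x ∈ Ioi (1:ℝ), HasDerivAt G1 (h1fn x) x :=
  fun x hx => hasDerivAt_G1 (lt_trans one_pos hx)

lemma h1fn_nonneg' : ∀ x ∈ Ioi (1:ℝ), 0 ≤ h1fn x := fun x hx => h1fn_nonneg hx

lemma contW_G1 : ContinuousWithinAt G1 (Ici 1) 1 :=
  (hasDerivAt_G1 one_pos).continuousAt.continuousWithinAt

lemma G1_one : G1 1 = 2 - 4 * Real.log 2 := by
  unfold G1
  rw [Real.log_one]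
  norm_num
  ring

lemma G1_two : G1 2 = 17 / 12 + 4 * Real.log 2 - 4 * Real.log 3 := by
  unfold G1
  norm_num
  ring

lemma integral_h1_Ioi : ∫ u in Ioi (1:ℝ), h1fn u = 4 * Real.log 2 - 2 := by
  rw [integral_Ioi_of_hasDerivAt_of_nonneg contW_G1 hasDerivAt_G1' h1fn_nonneg' tendsto_G1,
    G1_one]
  ring

lemma integrableOn_h1_Ioi : IntegrableOn h1fn (Ioi 1) :=
  integrableOn_Ioi_deriv_of_nonneg contW_G1 hasDerivAt_G1' h1fn_nonneg' tendsto_G1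

lemma integral_h1_Ioo : ∫ u in Ioo (1:ℝ) 2, h1fn u = 8 * Real.log 2 - 4 * Real.log 3 - 7 / 12 := by
  rw [← integral_Ioc_eq_integral_Ioo, ← intervalIntegral.integral_of_le one_le_two]
  have : ∫ u in (1:ℝ)..2, h1fn u = G1 2 - G1 1 := by
    apply intervalIntegral.integral_eq_sub_of_hasDerivAt
    · intro x hx
      rw [uIcc_of_le one_le_two] at hx
      exact hasDerivAt_G1 (by linarith [hx.1])
    · apply ContinuousOn.intervalIntegrable
      rw [uIcc_of_le one_le_two]
      exact continuousOn_h1fn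
  rw [this, G1_one, G1_two]
  ring

lemma integrableOn_h1_Ioo : IntegrableOn h1fn (Ioo 1 2) :=
  (continuousOn_h1fn.integrableOn_Icc).mono_set Ioo_subset_Icc_self

/-! ### values of the joint law -/

lemma nonneg_ae_Ioi : (0:ℝ → ℝ) ≤ᶠ[ae (volume.restrict (Ioi 1))] h1fn := by
  refine (ae_restrict_iff' measurableSet_Ioi).2 (ae_of_all _ fun x hx => ?_)
  simpa using h1fn_nonneg hx

lemma nonneg_ae_Ioo : (0:ℝ → ℝ) ≤ᶠ[ae (volume.restrict (Ioo 1 2))] h1fn := by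
  refine (ae_restrict_iff' measurableSet_Ioo).2 (ae_of_all _ fun x hx => ?_)
  simpa using h1fn_nonneg hx.1

lemma valS2 : jointLaw 2 {p : ℝ × ℝ | p.2 - p.1 < 1}
    = ENNReal.ofReal (4 * Real.log 2 - 2) := by
  have hs : MeasurableSet {p : ℝ × ℝ | p.2 - p.1 < 1} :=
    (measurable_snd.sub measurable_fst) measurableSet_Iio
  rw [jointLaw_two_apply hs]
  have hint : (fun u : ℝ =>
        D u * kendallStep u ((fun v => (u, v)) ⁻¹' {p : ℝ × ℝ | p.2 - p.1 < 1}))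
      = (Ioi 1).indicator (fun u => ENNReal.ofReal (h1fn u)) := by
    funext u
    unfold D
    by_cases hu : 1 < u
    · have hpre : ((fun v : ℝ => (u, v)) ⁻¹' {p : ℝ × ℝ | p.2 - p.1 < 1}) = Iio (u + 1) := by
        ext v
        simp only [mem_preimage, mem_setOf_eq, mem_Iio]
        constructor <;> intro h <;> linarith
      rw [hpre, kendall_Iio hu, Set.indicator_of_mem (mem_Ioi.2 hu),
        Set.indicator_of_mem (mem_Ioi.2 hu), ← ENNReal.ofReal_mul (by positivity)]
      rfl
    · rw [Set.indicator_of_notMem (by simpa using hu),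
        Set.indicator_of_notMem (by simpa using hu), zero_mul]
  rw [hint, lintegral_indicator measurableSet_Ioi,
    ← ofReal_integral_eq_lintegral_ofReal integrableOn_h1_Ioi nonneg_ae_Ioi, integral_h1_Ioi]

lemma valS1 : jointLaw 2 {p : ℝ × ℝ | p.2 - p.1 < 1 ∧ p.1 < 2}
    = ENNReal.ofReal (8 * Real.log 2 - 4 * Real.log 3 - 7 / 12) := by
  have hs : MeasurableSet {p : ℝ × ℝ | p.2 - p.1 < 1 ∧ p.1 < 2} := by
    exact ((measurable_snd.sub measurable_fst) measurableSet_Iio).inter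
      (measurable_fst measurableSet_Iio)
  rw [jointLaw_two_apply hs]
  have hint : (fun u : ℝ =>
        D u * kendallStep u ((fun v => (u, v)) ⁻¹' {p : ℝ × ℝ | p.2 - p.1 < 1 ∧ p.1 < 2}))
      = (Ioo 1 2).indicator (fun u => ENNReal.ofReal (h1fn u)) := by
    funext u
    unfold D
    by_cases hu : u ∈ Ioo (1:ℝ) 2
    · have hpre : ((fun v : ℝ => (u, v)) ⁻¹' {p : ℝ × ℝ | p.2 - p.1 < 1 ∧ p.1 < 2})
          = Iio (u + 1) := by
        ext v
        simp only [mem_preimage, mem_setOf_eq, mem_Iio]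
        constructor
        · intro h; linarith [h.1]
        · intro h; exact ⟨by linarith, hu.2⟩
      rw [hpre, kendall_Iio hu.1, Set.indicator_of_mem (mem_Ioi.2 hu.1),
        Set.indicator_of_mem hu, ← ENNReal.ofReal_mul (by have := hu.1; positivity)]
      rfl
    · by_cases h1u : 1 < u
      · have h2u : ¬ u < 2 := fun h => hu ⟨h1u, h⟩
        have hpre : ((fun v : ℝ => (u, v)) ⁻¹' {p : ℝ × ℝ | p.2 - p.1 < 1 ∧ p.1 < 2})
            = (∅ : Set ℝ) := by
          ext v
          simp [h2u]
        rw [hpre, measure_empty, mul_zero, Set.indicator_of_notMem hu]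
      · rw [Set.indicator_of_notMem (by simpa using h1u),
          Set.indicator_of_notMem hu, zero_mul]
  rw [hint, lintegral_indicator measurableSet_Ioo,
    ← ofReal_integral_eq_lintegral_ofReal integrableOn_h1_Ioo nonneg_ae_Ioo, integral_h1_Ioo]

lemma valS3 : jointLaw 2 {p : ℝ × ℝ | p.1 < 2} = ENNReal.ofReal (3 / 4) := by
  have hs : MeasurableSet {p : ℝ × ℝ | p.1 < 2} := measurable_fst measurableSet_Iio
  rw [jointLaw_two_apply hs]
  have hint : (fun u : ℝ =>
        D u * kendallStep u ((fun v => (u, v)) ⁻¹' {p : ℝ × ℝ | p.1 < 2}))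
      = (Ioo 1 2).indicator (fun u => ENNReal.ofReal (2 / u ^ 3)) := by
    funext u
    unfold D
    by_cases hu : u ∈ Ioo (1:ℝ) 2
    · have hpre : ((fun v : ℝ => (u, v)) ⁻¹' {p : ℝ × ℝ | p.1 < 2}) = (univ : Set ℝ) := by
        ext v
        simp [hu.2]
      rw [hpre, kendall_univ hu.1, Set.indicator_of_mem (mem_Ioi.2 hu.1),
        Set.indicator_of_mem hu, mul_one]
    · by_cases h1u : 1 < u
      · have h2u : ¬ u < 2 := fun h => hu ⟨h1u, h⟩
        have hpre : ((fun v : ℝ => (u, v)) ⁻¹' {p : ℝ × ℝ | p.1 < 2}) = (∅ : Set ℝ) := by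
          ext v
          simp [h2u]
        rw [hpre, measure_empty, mul_zero, Set.indicator_of_notMem hu]
      · rw [Set.indicator_of_notMem (by simpa using h1u),
          Set.indicator_of_notMem hu, zero_mul]
  rw [hint, lintegral_indicator measurableSet_Ioo, lint_Ioo one_lt_two]
  norm_num

/-! ### the key numerical inequality -/

lemma key_log : 11 / 12 < 4 * Real.log 3 - 5 * Real.log 2 := by
  have e13 : Real.exp (11/12 : ℝ) * Real.exp (1/12 : ℝ) = Real.exp 1 := by
    rw [← Real.exp_add]; norm_num
  have l13 : (13:ℝ)/12 ≤ Real.exp (1/12) := by linarith [Real.add_one_le_exp (1/12 : ℝ)]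
  have pe : (0:ℝ) < Real.exp (11/12 : ℝ) := Real.exp_pos _
  have hexp : Real.exp (11/12 : ℝ) < 81/32 := by
    nlinarith [Real.exp_one_lt_d9, mul_le_mul_of_nonneg_left l13 pe.le]
  have hlt : (11:ℝ)/12 < Real.log (81/32) := (Real.lt_log_iff_exp_lt (by norm_num)).2 hexp
  have hlog : Real.log ((81:ℝ)/32) = 4 * Real.log 3 - 5 * Real.log 2 := by
    rw [show (81:ℝ)/32 = 3^4/2^5 by norm_num, Real.log_div (by positivity) (by positivity),
      Real.log_pow, Real.log_pow]
    push_cast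
    ring
  linarith

lemma a_nonneg : (0:ℝ) ≤ 8 * Real.log 2 - 4 * Real.log 3 - 7 / 12 := by
  have h34 : Real.log ((3:ℝ)/4) ≤ 3/4 - 1 := Real.log_le_sub_one_of_pos (by norm_num)
  have e34 : Real.log ((3:ℝ)/4) = Real.log 3 - 2 * Real.log 2 := by
    rw [show (3:ℝ)/4 = 3/2^2 by norm_num, Real.log_div (by norm_num) (by positivity),
      Real.log_pow]
    push_cast
    ring
  linarith

/-- On the probability space `(ℝ², μ)` with `μ = π_2 ⊗ K` the joint law of `(X_2, X_3)`
(note `λ_2 = π_2`), the coordinate `U(u,v) = u` and the increment `W(u,v) = v - u` are not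
independent: there are `w > 0` and `z > 1` with
`μ({v - u < w, u < z}) ≠ μ({v - u < w}) μ({u < z})`. -/
theorem increment_not_independent :
    ∃ w : ℝ, 0 < w ∧ ∃ z : ℝ, 1 < z ∧
      jointLaw 2 {p : ℝ × ℝ | p.2 - p.1 < w ∧ p.1 < z}
        ≠ jointLaw 2 {p : ℝ × ℝ | p.2 - p.1 < w}
          * jointLaw 2 {p : ℝ × ℝ | p.1 < z} := by
  refine ⟨1, one_pos, 2, one_lt_two, ?_⟩
  have hb : (0:ℝ) ≤ 4 * Real.log 2 - 2 := by
    have := Real.log_two_gt_d9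
    linarith
  rw [valS1, valS2, valS3, ← ENNReal.ofReal_mul hb]
  have hprod : (4 * Real.log 2 - 2) * (3 / 4) = 3 * Real.log 2 - 3 / 2 := by ring
  rw [hprod]
  intro h
  rw [ENNReal.ofReal_eq_ofReal_iff a_nonneg (by linarith)] at h
  have := key_log
  linarith
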